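/- Fix ε > 0 such that max(2dε, 10ε) < 1, and let G be a d-layer ReLU network satisfying the R2WDC with constant ε. Then for all nonzero x, y ∈ ℝ^k and all j ∈ [d], the vectors G_j(x) and G_j(y) are nonzero, so the angle θ_j = ∠(G_j(x), G_j(y)) is well-defined, and |θ_j − g(θ_{j−1})| ≤ 4√ε, where θ_0 = ∠(x,y) and g(θ) = cos⁻¹(((π − θ)cos θ + sin θ)/π). -/

import Mathlib

open scoped BigOperators
open Real MeasureTheory ProbabilityTheory Filter
open scoped Matrix

noncomputable section

namespace R2WDCFormal

/-- Euclidean inner product on `Fin n → ℝ`. -/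
def dotp {n : ℕ} (r s : Fin n → ℝ) : ℝ := ∑ i, r i * s i

/-- Euclidean norm on `Fin n → ℝ`. -/
def vnorm {n : ℕ} (r : Fin n → ℝ) : ℝ := Real.sqrt (dotp r r)

/-- Angle between two vectors. -/
def ang {n : ℕ} (r s : Fin n → ℝ) : ℝ := Real.arccos (dotp r s / (vnorm r * vnorm s))

/-- Outer product of two vectors, as a matrix. -/
def outer {n : ℕ} (u v : Fin n → ℝ) : Matrix (Fin n) (Fin n) ℝ := Matrix.of fun i j => u i * v j

/-- The matrix sending `r̂ ↦ ŝ`, `ŝ ↦ r̂` with kernel `span{r,s}ᗮ`. -/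
def Mswap {n : ℕ} (r s : Fin n → ℝ) : Matrix (Fin n) (Fin n) ℝ :=
  outer ((vnorm ((vnorm r)⁻¹ • r + (vnorm s)⁻¹ • s))⁻¹ • ((vnorm r)⁻¹ • r + (vnorm s)⁻¹ • s))
        ((vnorm ((vnorm r)⁻¹ • r + (vnorm s)⁻¹ • s))⁻¹ • ((vnorm r)⁻¹ • r + (vnorm s)⁻¹ • s)) -
  outer ((vnorm ((vnorm r)⁻¹ • r - (vnorm s)⁻¹ • s))⁻¹ • ((vnorm r)⁻¹ • r - (vnorm s)⁻¹ • s))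
        ((vnorm ((vnorm r)⁻¹ • r - (vnorm s)⁻¹ • s))⁻¹ • ((vnorm r)⁻¹ • r - (vnorm s)⁻¹ • s))

/-- The matrix `Q_{r,s}`. -/
def Qmat {n : ℕ} (r s : Fin n → ℝ) : Matrix (Fin n) (Fin n) ℝ :=
  if r = 0 ∨ s = 0 then 0
  else ((π - ang r s) / (2 * π)) • (1 : Matrix (Fin n) (Fin n) ℝ) +
    (Real.sin (ang r s) / (2 * π)) • Mswap r s

/-- `W_{+,x} = diag(Wx > 0) W`. -/
def Wplus {m n : ℕ} (W : Matrix (Fin m) (Fin n) ℝ) (x : Fin n → ℝ) : Matrix (Fin m) (Fin n) ℝ :=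
  Matrix.of fun i j => if 0 < W.mulVec x i then W i j else 0

/-- Entrywise ReLU. -/
def reluVec {n : ℕ} (v : Fin n → ℝ) : Fin n → ℝ := fun i => max (v i) 0

/-- Sub-network `G_j` of the ReLU network with layer sizes `nn` and weights `W`. -/
def subnet (nn : ℕ → ℕ) (W : ∀ i : ℕ, Matrix (Fin (nn (i + 1))) (Fin (nn i)) ℝ) :
    ∀ j : ℕ, (Fin (nn 0) → ℝ) → Fin (nn j) → ℝ
  | 0, x => x
  | j + 1, x => reluVec ((W j).mulVec (subnet nn W j x))

/-- `Λ_{j,x} = W_{j,+,x} ⋯ W_{1,+,x}`. -/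
def LambdaMat (nn : ℕ → ℕ) (W : ∀ i : ℕ, Matrix (Fin (nn (i + 1))) (Fin (nn i)) ℝ) :
    ∀ j : ℕ, (Fin (nn 0) → ℝ) → Matrix (Fin (nn j)) (Fin (nn 0)) ℝ
  | 0, _ => 1
  | j + 1, x => Wplus (W j) (subnet nn W j x) * LambdaMat nn W j x

/-- Range Restricted Weight Distribution Condition with constant `ε` of a `d`-layer network. -/
def R2WDCond (nn : ℕ → ℕ) (d : ℕ)
    (W : ∀ i : ℕ, Matrix (Fin (nn (i + 1))) (Fin (nn i)) ℝ) (ε : ℝ) : Prop :=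
  ∀ i < d, ∀ x y x₁ x₂ x₃ x₄ : Fin (nn 0) → ℝ,
    |dotp (((Wplus (W i) (subnet nn W i x))ᵀ * Wplus (W i) (subnet nn W i y) -
        Qmat (subnet nn W i x) (subnet nn W i y)).mulVec
        (subnet nn W i x₁ - subnet nn W i x₂)) (subnet nn W i x₃ - subnet nn W i x₄)| ≤
      ε * vnorm (subnet nn W i x₁ - subnet nn W i x₂) * vnorm (subnet nn W i x₃ - subnet nn W i x₄)

/-- Range Restricted Isometry Condition of `A` with respect to the network, with constant `ε`. -/
def RRICond (nn : ℕ → ℕ) (d : ℕ)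
    (W : ∀ i : ℕ, Matrix (Fin (nn (i + 1))) (Fin (nn i)) ℝ) {mm : ℕ}
    (A : Matrix (Fin mm) (Fin (nn d)) ℝ) (ε : ℝ) : Prop :=
  ∀ x₁ x₂ x₃ x₄ : Fin (nn 0) → ℝ,
    |dotp ((Aᵀ * A - 1).mulVec (subnet nn W d x₁ - subnet nn W d x₂))
        (subnet nn W d x₃ - subnet nn W d x₄)| ≤
      ε * vnorm (subnet nn W d x₁ - subnet nn W d x₂) * vnorm (subnet nn W d x₃ - subnet nn W d x₄)

/-- The angle-distortion function `g`. -/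
def gAngle (θ : ℝ) : ℝ := Real.arccos (((π - θ) * Real.cos θ + Real.sin θ) / π)

/-- The deterministic vector field `h̃_{x,y}`. -/
def htilde {k : ℕ} (d : ℕ) (x y : Fin k → ℝ) : Fin k → ℝ :=
  (1 / 2 ^ d : ℝ) • ((∏ i ∈ Finset.range d, (π - gAngle^[i] (ang x y)) / π) • y +
    (∑ i ∈ Finset.Ico 1 d, Real.sin (gAngle^[i] (ang x y)) / π *
      ∏ j ∈ Finset.Ico (i + 1) d, (π - gAngle^[j] (ang x y)) / π) •
      (vnorm y • (vnorm x)⁻¹ • x))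

/-- Spectral (ℓ²-operator) norm of a matrix. -/
def specNorm {a b : ℕ} (M : Matrix (Fin a) (Fin b) ℝ) : ℝ :=
  ⨆ v : {v : Fin b → ℝ // vnorm v ≤ 1}, vnorm (M.mulVec v)

/-- The entries of the random matrix `W` are i.i.d. `N(0, v)`. -/
def IIDGaussian {Ω : Type*} [MeasurableSpace Ω] (μ : Measure Ω) {a b : ℕ}
    (W : Ω → Fin a → Fin b → ℝ) (v : NNReal) : Prop :=
  Measure.map W μ = Measure.pi fun _ : Fin a => Measure.pi fun _ : Fin b => gaussianReal 0 v

/-- The noise factor `ω`. -/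
def omegaNoise (nn : ℕ → ℕ) (d mm : ℕ) : ℝ :=
  2 / 2 ^ ((d : ℝ) / 2) * Real.sqrt (13 / 12) *
    Real.sqrt ((nn 0 : ℝ) / mm * Real.log (5 * ∏ j ∈ Finset.Icc 1 d, Real.exp 1 * nn j / nn 0))

/-- Clarke subdifferential of `f` at `x`: the convex hull of all limits of gradients of `f`
at nearby differentiability points. -/
def clarkeSubdiff {k : ℕ} (f : (Fin k → ℝ) → ℝ) (x : Fin k → ℝ) : Set (Fin k → ℝ) :=
  convexHull ℝ {v : Fin k → ℝ | ∃ u : ℕ → Fin k → ℝ,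
    (∀ t, DifferentiableAt ℝ f (u t)) ∧
    Tendsto u atTop (nhds x) ∧
    Tendsto (fun t => fun i => fderiv ℝ f (u t) (Pi.single i 1)) atTop (nhds v)}

/-- The compressed sensing objective `f_cs`. -/
def fcs (nn : ℕ → ℕ) (d : ℕ) (W : ∀ i : ℕ, Matrix (Fin (nn (i + 1))) (Fin (nn i)) ℝ)
    {mm : ℕ} (A : Matrix (Fin mm) (Fin (nn d)) ℝ) (b : Fin mm → ℝ)
    (x : Fin (nn 0) → ℝ) : ℝ :=
  1 / 2 * vnorm (b - A.mulVec (subnet nn W d x)) ^ 2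


section AuxLemmas

variable {n : ℕ}

lemma dotp_comm (r s : Fin n → ℝ) : dotp r s = dotp s r := by
  unfold dotp; exact Finset.sum_congr rfl fun i _ => mul_comm _ _

lemma dotp_add_left (u v w : Fin n → ℝ) : dotp (u + v) w = dotp u w + dotp v w := by
  simp [dotp, add_mul, Finset.sum_add_distrib]

lemma dotp_sub_left (u v w : Fin n → ℝ) : dotp (u - v) w = dotp u w - dotp v w := by
  simp [dotp, sub_mul, Finset.sum_sub_distrib]

lemma dotp_smul_left (c : ℝ) (u w : Fin n → ℝ) : dotp (c • u) w = c * dotp u w := by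
  simp [dotp, Finset.mul_sum, mul_assoc]

lemma dotp_smul_right (c : ℝ) (u w : Fin n → ℝ) : dotp u (c • w) = c * dotp u w := by
  rw [dotp_comm, dotp_smul_left, dotp_comm]

lemma dotp_self_nonneg (r : Fin n → ℝ) : 0 ≤ dotp r r :=
  Finset.sum_nonneg fun i _ => mul_self_nonneg _

lemma dotp_self_eq_zero {r : Fin n → ℝ} : dotp r r = 0 ↔ r = 0 := by
  constructor
  · intro h
    funext i
    have := (Finset.sum_eq_zero_iff_of_nonneg (fun i _ => mul_self_nonneg (r i))).mp h i
      (Finset.mem_univ i)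
    have := mul_self_eq_zero.mp this
    simpa using this
  · intro h; simp [h, dotp]

lemma vnorm_nonneg (r : Fin n → ℝ) : 0 ≤ vnorm r := Real.sqrt_nonneg _

lemma vnorm_sq (r : Fin n → ℝ) : vnorm r ^ 2 = dotp r r :=
  Real.sq_sqrt (dotp_self_nonneg r)

lemma vnorm_mul_self (r : Fin n → ℝ) : vnorm r * vnorm r = dotp r r := by
  rw [← sq, vnorm_sq]

lemma vnorm_eq_zero_iff {r : Fin n → ℝ} : vnorm r = 0 ↔ r = 0 := by
  rw [vnorm, Real.sqrt_eq_zero (dotp_self_nonneg r), dotp_self_eq_zero]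

lemma vnorm_pos {r : Fin n → ℝ} (hr : r ≠ 0) : 0 < vnorm r :=
  lt_of_le_of_ne (vnorm_nonneg r) fun h => hr (vnorm_eq_zero_iff.mp h.symm)

lemma abs_dotp_le (r s : Fin n → ℝ) : |dotp r s| ≤ vnorm r * vnorm s := by
  have h := Finset.sum_mul_sq_le_sq_mul_sq Finset.univ r s
  have h2 : dotp r s ^ 2 ≤ (vnorm r * vnorm s) ^ 2 := by
    rw [mul_pow, vnorm_sq, vnorm_sq]
    simpa [dotp, sq] using h
  calc |dotp r s| = Real.sqrt (dotp r s ^ 2) := (Real.sqrt_sq_eq_abs _).symm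
    _ ≤ Real.sqrt ((vnorm r * vnorm s) ^ 2) := Real.sqrt_le_sqrt h2
    _ = vnorm r * vnorm s := Real.sqrt_sq (mul_nonneg (vnorm_nonneg r) (vnorm_nonneg s))

lemma ang_nonneg (r s : Fin n → ℝ) : 0 ≤ ang r s := Real.arccos_nonneg _

lemma ang_le_pi (r s : Fin n → ℝ) : ang r s ≤ π := Real.arccos_le_pi _

lemma cos_ang {r s : Fin n → ℝ} (hr : r ≠ 0) (hs : s ≠ 0) :
    Real.cos (ang r s) = dotp r s / (vnorm r * vnorm s) := by
  have hpos : 0 < vnorm r * vnorm s := mul_pos (vnorm_pos hr) (vnorm_pos hs)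
  have habs : |dotp r s / (vnorm r * vnorm s)| ≤ 1 := by
    rw [abs_div, abs_of_pos hpos, div_le_one hpos]
    exact abs_dotp_le r s
  have h1 := abs_le.mp habs
  exact Real.cos_arccos h1.1 h1.2

lemma ang_self {r : Fin n → ℝ} (hr : r ≠ 0) : ang r r = 0 := by
  unfold ang
  rw [vnorm_mul_self]
  have hpos : 0 < dotp r r :=
    lt_of_le_of_ne (dotp_self_nonneg r) fun h => hr (dotp_self_eq_zero.mp h.symm)
  rw [div_self (ne_of_gt hpos)]
  exact Real.arccos_one

lemma dotp_mulVec_sub {m : ℕ} (M N : Matrix (Fin m) (Fin n) ℝ) (v : Fin n → ℝ) (w : Fin m → ℝ) :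
    dotp ((M - N).mulVec v) w = dotp (M.mulVec v) w - dotp (N.mulVec v) w := by
  rw [Matrix.sub_mulVec, dotp_sub_left]

lemma dotp_transmul {m : ℕ} (A B : Matrix (Fin m) (Fin n) ℝ) (v w : Fin n → ℝ) :
    dotp ((Aᵀ * B).mulVec v) w = dotp (B.mulVec v) (A.mulVec w) := by
  show ((Aᵀ * B) *ᵥ v) ⬝ᵥ w = (B *ᵥ v) ⬝ᵥ (A *ᵥ w)
  rw [← Matrix.mulVec_mulVec, dotProduct_comm, Matrix.dotProduct_mulVec,
    Matrix.vecMul_transpose, dotProduct_comm]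

lemma dotp_outer (u v s r : Fin n → ℝ) :
    dotp ((outer u v).mulVec s) r = dotp v s * dotp u r := by
  unfold dotp outer Matrix.mulVec dotProduct
  simp only [Matrix.of_apply]
  rw [Finset.sum_mul_sum]
  rw [Finset.sum_comm]
  apply Finset.sum_congr rfl; intro i _
  rw [Finset.sum_mul]
  apply Finset.sum_congr rfl; intro j _
  ring

lemma subnet_zero (nn : ℕ → ℕ) (W : ∀ i : ℕ, Matrix (Fin (nn (i + 1))) (Fin (nn i)) ℝ) :
    ∀ j, subnet nn W j 0 = 0 := by
  intro j
  induction j with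
  | zero => rfl
  | succ j ih =>
    show reluVec ((W j).mulVec (subnet nn W j 0)) = 0
    rw [ih, Matrix.mulVec_zero]
    funext i
    simp [reluVec]

lemma subnet_succ (nn : ℕ → ℕ) (W : ∀ i : ℕ, Matrix (Fin (nn (i + 1))) (Fin (nn i)) ℝ)
    (j : ℕ) (x : Fin (nn 0) → ℝ) :
    subnet nn W (j + 1) x = (Wplus (W j) (subnet nn W j x)).mulVec (subnet nn W j x) := by
  funext i
  show max ((W j).mulVec (subnet nn W j x) i) 0 = _
  simp only [Wplus, Matrix.mulVec, dotProduct, Matrix.of_apply]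
  by_cases h : 0 < ∑ k, W j i k * subnet nn W j x k
  · rw [max_eq_left h.le]
    refine (Finset.sum_congr rfl fun k _ => ?_).symm
    rw [if_pos h]
  · rw [max_eq_right (le_of_not_gt h)]
    refine (Finset.sum_eq_zero fun k _ => ?_).symm
    rw [if_neg h, zero_mul]


lemma dotp_add_right (u v w : Fin n → ℝ) : dotp u (v + w) = dotp u v + dotp u w := by
  rw [dotp_comm, dotp_add_left, dotp_comm v u, dotp_comm w u]

lemma dotp_Mswap {r s : Fin n → ℝ} (hr : r ≠ 0) (hs : s ≠ 0) :
    dotp ((Mswap r s).mulVec s) r = vnorm r * vnorm s := by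
  unfold Mswap
  have ha : 0 < vnorm r := vnorm_pos hr
  have hb : 0 < vnorm s := vnorm_pos hs
  set a := vnorm r with ha'
  set b := vnorm s with hb'
  set c := dotp r s with hc'
  set u : Fin n → ℝ := a⁻¹ • r + b⁻¹ • s with hu'
  set w : Fin n → ℝ := a⁻¹ • r - b⁻¹ • s with hw'
  have hrr : dotp r r = a * a := (vnorm_mul_self r).symm
  have hss : dotp s s = b * b := (vnorm_mul_self s).symm
  have hsr : dotp s r = c := dotp_comm s r
  have hus : dotp u s = a⁻¹ * c + b := by
    rw [hu', dotp_add_left, dotp_smul_left, dotp_smul_left, hss]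
    field_simp
    rfl
  have hur : dotp u r = a + b⁻¹ * c := by
    rw [hu', dotp_add_left, dotp_smul_left, dotp_smul_left, hrr, hsr]
    field_simp
  have hws : dotp w s = a⁻¹ * c - b := by
    rw [hw', dotp_sub_left, dotp_smul_left, dotp_smul_left, hss]
    field_simp
    rfl
  have hwr : dotp w r = a - b⁻¹ * c := by
    rw [hw', dotp_sub_left, dotp_smul_left, dotp_smul_left, hrr, hsr]
    field_simp
  have huu : dotp u u = 2 + 2 * c / (a * b) := by
    rw [hu', dotp_add_right, dotp_smul_right, dotp_smul_right, ← hu', hus, hur]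
    field_simp
    ring
  have hww : dotp w w = 2 - 2 * c / (a * b) := by
    have e : dotp w w = a⁻¹ * dotp w r - b⁻¹ * dotp w s := by
      nth_rewrite 1 [hw']
      rw [dotp_sub_left, dotp_smul_left, dotp_smul_left, dotp_comm r w, dotp_comm s w]
    rw [e, hws, hwr]
    field_simp
    ring
  rw [dotp_mulVec_sub, dotp_outer, dotp_outer,
    dotp_smul_left, dotp_smul_left, dotp_smul_left, dotp_smul_left]
  have hvu : (vnorm u)⁻¹ * (vnorm u)⁻¹ = (dotp u u)⁻¹ := by
    rw [← mul_inv, vnorm_mul_self]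
  have hvw : (vnorm w)⁻¹ * (vnorm w)⁻¹ = (dotp w w)⁻¹ := by
    rw [← mul_inv, vnorm_mul_self]
  have T1 : (vnorm u)⁻¹ * dotp u s * ((vnorm u)⁻¹ * dotp u r) = (c + a * b) / 2 := by
    have e : (vnorm u)⁻¹ * dotp u s * ((vnorm u)⁻¹ * dotp u r)
        = (dotp u u)⁻¹ * (dotp u s * dotp u r) := by
      rw [← hvu]; ring
    rw [e, hus, hur, huu]
    by_cases habc : a * b + c = 0
    · have hc0 : c = -(a * b) := by linarith
      rw [hc0]
      have : 2 + 2 * -(a * b) / (a * b) = 0 := by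
        field_simp
        norm_num
      rw [this]
      simp
    · have hne : 2 + 2 * c / (a * b) ≠ 0 := by
        have e2 : 2 + 2 * c / (a * b) = 2 * (a * b + c) / (a * b) := by
          field_simp
        rw [e2]
        exact div_ne_zero (by intro h; apply habc; linarith) (by positivity)
      rw [inv_mul_eq_iff_eq_mul₀ hne]
      field_simp
  have T2 : (vnorm w)⁻¹ * dotp w s * ((vnorm w)⁻¹ * dotp w r) = (c - a * b) / 2 := by
    have e : (vnorm w)⁻¹ * dotp w s * ((vnorm w)⁻¹ * dotp w r)
        = (dotp w w)⁻¹ * (dotp w s * dotp w r) := by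
      rw [← hvw]; ring
    rw [e, hws, hwr, hww]
    by_cases habc : a * b - c = 0
    · have hc0 : c = a * b := by linarith
      rw [hc0]
      have : 2 - 2 * (a * b) / (a * b) = 0 := by
        field_simp
        norm_num
      rw [this]
      simp
    · have hne : 2 - 2 * c / (a * b) ≠ 0 := by
        have e2 : 2 - 2 * c / (a * b) = 2 * (a * b - c) / (a * b) := by
          field_simp
        rw [e2]
        exact div_ne_zero (by intro h; apply habc; linarith) (by positivity)
      rw [inv_mul_eq_iff_eq_mul₀ hne]
      field_simp
  rw [T1, T2]
  ring

lemma dotp_Q {r s : Fin n → ℝ} (hr : r ≠ 0) (hs : s ≠ 0) :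
    dotp ((Qmat r s).mulVec s) r = vnorm r * vnorm s *
      (((π - ang r s) * Real.cos (ang r s) + Real.sin (ang r s)) / (2 * π)) := by
  unfold Qmat
  rw [if_neg (by simp [hr, hs])]
  rw [Matrix.add_mulVec, dotp_add_left, Matrix.smul_mulVec, Matrix.smul_mulVec,
    Matrix.one_mulVec, dotp_smul_left, dotp_smul_left, dotp_Mswap hr hs, dotp_comm s r,
    cos_ang hr hs]
  have ha : 0 < vnorm r := vnorm_pos hr
  have hb : 0 < vnorm s := vnorm_pos hs
  have hπ : (π : ℝ) ≠ 0 := Real.pi_ne_zero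
  field_simp

lemma dotp_Q_self {r : Fin n → ℝ} (hr : r ≠ 0) :
    dotp ((Qmat r r).mulVec r) r = vnorm r * vnorm r / 2 := by
  rw [dotp_Q hr hr, ang_self hr]
  rw [Real.sin_zero, Real.cos_zero]
  have hπ : (π : ℝ) ≠ 0 := Real.pi_ne_zero
  field_simp
  ring


lemma hh_nonneg {θ : ℝ} (h0 : 0 ≤ θ) (hπ : θ ≤ π) :
    0 ≤ (π - θ) * Real.cos θ + Real.sin θ := by
  rcases le_or_gt θ (π / 2) with h | h
  · have hc : 0 ≤ Real.cos θ := Real.cos_nonneg_of_mem_Icc ⟨by linarith, h⟩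
    have hs : 0 ≤ Real.sin θ := Real.sin_nonneg_of_nonneg_of_le_pi h0 hπ
    have h1 : (0:ℝ) ≤ π - θ := by linarith
    nlinarith [mul_nonneg h1 hc]
  · have hφ0 : 0 ≤ π - θ := by linarith
    have hφ : π - θ < π / 2 := by linarith
    have hcos : Real.cos θ = -Real.cos (π - θ) := by
      rw [Real.cos_pi_sub]; ring
    have hsin : Real.sin θ = Real.sin (π - θ) := (Real.sin_pi_sub θ).symm
    rw [hcos, hsin]
    rcases eq_or_lt_of_le hφ0 with h0' | h0'
    · rw [← h0']
      simp
    · have htan := Real.lt_tan h0' hφ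
      have hcpos : 0 < Real.cos (π - θ) :=
        Real.cos_pos_of_mem_Ioo ⟨by linarith, hφ⟩
      rw [Real.tan_eq_sin_div_cos] at htan
      have := (lt_div_iff₀ hcpos).mp htan
      nlinarith

lemma hh_le_pi {θ : ℝ} (h0 : 0 ≤ θ) (hπ : θ ≤ π) :
    (π - θ) * Real.cos θ + Real.sin θ ≤ π := by
  have h1 : (π - θ) * Real.cos θ ≤ π - θ :=
    mul_le_of_le_one_right (by linarith) (Real.cos_le_one θ)
  have h2 : Real.sin θ ≤ θ := by
    rcases eq_or_lt_of_le h0 with h | h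
    · rw [← h]; simp
    · exact (Real.sin_lt h).le
  linarith

lemma one_sub_cos_eq (x : ℝ) : 1 - Real.cos x = 2 * Real.sin (x / 2) ^ 2 := by
  have : Real.cos x = 1 - 2 * Real.sin (x / 2) ^ 2 := by
    rw [show x = 2 * (x / 2) by ring, Real.cos_two_mul, Real.cos_sq']
    ring_nf
  linarith

lemma one_sub_cos_le {α β : ℝ} (hα0 : 0 ≤ α) (hαπ : α ≤ π) (hβ0 : 0 ≤ β) (hβπ : β ≤ π) :
    1 - Real.cos (α - β) ≤ |Real.cos α - Real.cos β| := by
  wlog h : β ≤ α generalizing α β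
  · have := this hβ0 hβπ hα0 hαπ (le_of_not_ge h)
    rw [abs_sub_comm] at this
    rw [show α - β = -(β - α) by ring, Real.cos_neg]
    exact this
  have key : Real.cos β - Real.cos α
      = 2 * Real.sin ((β + α) / 2) * Real.sin ((α - β) / 2) := by
    rw [Real.cos_sub_cos, show (β - α) / 2 = -((α - β) / 2) by ring, Real.sin_neg]
    ring
  have h1 : 0 ≤ Real.sin ((α - β) / 2) :=
    Real.sin_nonneg_of_nonneg_of_le_pi (by linarith) (by linarith)
  have h2 : Real.sin ((α - β) / 2) ≤ Real.sin ((β + α) / 2) := by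
    have e : Real.sin ((β + α) / 2) - Real.sin ((α - β) / 2)
        = 2 * Real.sin (β / 2) * Real.cos (α / 2) := by
      rw [Real.sin_sub_sin, show ((β + α) / 2 - (α - β) / 2) / 2 = β / 2 by ring,
        show ((β + α) / 2 + (α - β) / 2) / 2 = α / 2 by ring]
    have hs : 0 ≤ Real.sin (β / 2) :=
      Real.sin_nonneg_of_nonneg_of_le_pi (by linarith) (by linarith)
    have hc : 0 ≤ Real.cos (α / 2) :=
      Real.cos_nonneg_of_mem_Icc ⟨by linarith, by linarith⟩
    nlinarith
  have h3 : Real.cos α ≤ Real.cos β := Real.cos_le_cos_of_nonneg_of_le_pi hβ0 hαπ h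
  rw [abs_of_nonpos (by linarith : Real.cos α - Real.cos β ≤ 0)]
  rw [one_sub_cos_eq]
  nlinarith

lemma angle_close {A B ε : ℝ} (hε : 0 < ε) (hε10 : 10 * ε < 1)
    (hA0 : 0 ≤ A) (hAπ : A ≤ π) (hB0 : 0 ≤ B) (hBπ : B ≤ π)
    (h : |Real.cos A - Real.cos B| ≤ 5 * ε) : |A - B| ≤ 4 * Real.sqrt ε := by
  by_contra hcon
  push_neg at hcon
  have hst : 0 < Real.sqrt ε := Real.sqrt_pos.mpr hε
  have hsε : Real.sqrt ε ^ 2 = ε := Real.sq_sqrt hε.le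
  have hε' : ε < 1 / 10 := by linarith
  have hsmall : Real.sqrt ε < 1 / 2 := by
    by_contra h'
    push_neg at h'
    nlinarith [mul_le_mul h' h' (by norm_num : (0:ℝ) ≤ 1 / 2) hst.le]
  have hδπ : |A - B| ≤ π := abs_le.mpr ⟨by linarith, by linarith⟩
  have ht : 0 < 4 * Real.sqrt ε := by positivity
  have h1 : 1 - Real.cos (A - B) ≤ 5 * ε :=
    le_trans (one_sub_cos_le hA0 hAπ hB0 hBπ) h
  have hcosabs : Real.cos (A - B) = Real.cos |A - B| := (Real.cos_abs _).symm
  have h2 : Real.cos |A - B| ≤ Real.cos (4 * Real.sqrt ε) :=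
    Real.cos_le_cos_of_nonneg_of_le_pi ht.le hδπ hcon.le
  have hx : 0.9 * (2 * Real.sqrt ε) < Real.sin (2 * Real.sqrt ε) := by
    have hb : 2 * Real.sqrt ε ≤ 1 := by linarith
    have := Real.sin_gt_sub_cube (x := 2 * Real.sqrt ε) (by positivity)
    nlinarith [hsε, hst]
  have h3 : 1 - Real.cos (4 * Real.sqrt ε) = 2 * Real.sin (2 * Real.sqrt ε) ^ 2 := by
    rw [one_sub_cos_eq, show 4 * Real.sqrt ε / 2 = 2 * Real.sqrt ε by ring]
  have hsq : (0.9 * (2 * Real.sqrt ε)) ^ 2 < Real.sin (2 * Real.sqrt ε) ^ 2 :=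
    pow_lt_pow_left₀ hx (by positivity) (by norm_num)
  nlinarith [hsq, hsε]


set_option maxHeartbeats 2000000 in
lemma abstract_step {N vA vB a b θ ε : ℝ} (hε : 0 < ε) (hε10 : 10 * ε < 1)
    (ha : 0 < a) (hb : 0 < b) (hθ0 : 0 ≤ θ) (hθπ : θ ≤ π)
    (hA : |vA ^ 2 - a * a / 2| ≤ ε * a * a) (hB : |vB ^ 2 - b * b / 2| ≤ ε * b * b)
    (hN : |N - a * b * (((π - θ) * Real.cos θ + Real.sin θ) / (2 * π))| ≤ ε * b * a)
    (hvA : 0 ≤ vA) (hvB : 0 ≤ vB) (hNle : |N| ≤ vA * vB) :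
    |Real.arccos (N / (vA * vB)) -
      Real.arccos (((π - θ) * Real.cos θ + Real.sin θ) / π)| ≤ 4 * Real.sqrt ε := by
  have hπ : (0:ℝ) < π := Real.pi_pos
  have hε' : ε < 1 / 10 := by linarith
  have hh0 : 0 ≤ (π - θ) * Real.cos θ + Real.sin θ := hh_nonneg hθ0 hθπ
  have hhπ : (π - θ) * Real.cos θ + Real.sin θ ≤ π := hh_le_pi hθ0 hθπ
  obtain ⟨P, hP'⟩ : ∃ p : ℝ, p = ((π - θ) * Real.cos θ + Real.sin θ) / π := ⟨_, rfl⟩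
  rw [← hP']
  have hP0 : 0 ≤ P := hP' ▸ div_nonneg hh0 hπ.le
  have hP1 : P ≤ 1 := by rw [hP', div_le_one hπ]; exact hhπ
  have hcg : Real.cos (Real.arccos P) = P := Real.cos_arccos (by linarith) hP1
  have hεA := abs_le.mp hA
  have hεB := abs_le.mp hB
  have hvA2 : (1 / 2 - ε) * (a * a) ≤ vA ^ 2 := by nlinarith [hεA.1]
  have hvB2 : (1 / 2 - ε) * (b * b) ≤ vB ^ 2 := by nlinarith [hεB.1]
  have haa : 0 < (1 / 2 - ε) * (a * a) := by nlinarith [mul_pos ha ha]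
  have hbb : 0 < (1 / 2 - ε) * (b * b) := by nlinarith [mul_pos hb hb]
  have hvA2pos : 0 < vA ^ 2 := lt_of_lt_of_le haa hvA2
  have hvB2pos : 0 < vB ^ 2 := lt_of_lt_of_le hbb hvB2
  have hvApos : 0 < vA := by
    rcases eq_or_lt_of_le hvA with h | h
    · exfalso; rw [← h] at hvA2pos; norm_num at hvA2pos
    · exact h
  have hvBpos : 0 < vB := by
    rcases eq_or_lt_of_le hvB with h | h
    · exfalso; rw [← h] at hvB2pos; norm_num at hvB2pos
    · exact h
  have hDpos : 0 < vA * vB := mul_pos hvApos hvBpos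
  have hD1 : (1 / 2 - ε) * (a * b) ≤ vA * vB := by
    have h1 : ((1 / 2 - ε) * (a * b)) ^ 2 ≤ (vA * vB) ^ 2 := by
      calc ((1 / 2 - ε) * (a * b)) ^ 2
          = ((1 / 2 - ε) * (a * a)) * ((1 / 2 - ε) * (b * b)) := by ring
        _ ≤ vA ^ 2 * vB ^ 2 := mul_le_mul hvA2 hvB2 hbb.le (sq_nonneg vA)
        _ = (vA * vB) ^ 2 := by ring
    exact le_of_pow_le_pow_left₀ two_ne_zero hDpos.le h1
  have hD2 : vA * vB ≤ (1 / 2 + ε) * (a * b) := by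
    have h3 : 0 ≤ (1 / 2 + ε) * (a * b) := by positivity
    have h1 : (vA * vB) ^ 2 ≤ ((1 / 2 + ε) * (a * b)) ^ 2 := by
      calc (vA * vB) ^ 2 = vA ^ 2 * vB ^ 2 := by ring
        _ ≤ ((1 / 2 + ε) * (a * a)) * ((1 / 2 + ε) * (b * b)) :=
            mul_le_mul (by linarith [hεA.2]) (by linarith [hεB.2]) hvB2pos.le
              (by positivity)
        _ = ((1 / 2 + ε) * (a * b)) ^ 2 := by ring
    exact le_of_pow_le_pow_left₀ two_ne_zero h3 h1
  have hNP : |N - P * (vA * vB)| ≤ 2 * ε * (a * b) := by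
    have e : a * b * (((π - θ) * Real.cos θ + Real.sin θ) / (2 * π)) = P * (a * b / 2) := by
      rw [hP']; field_simp
    rw [e] at hN
    have h6 : |a * b / 2 - vA * vB| ≤ ε * (a * b) := by
      rw [abs_le]
      constructor
      · nlinarith [hD2]
      · nlinarith [hD1]
    have h5 : |P * (a * b / 2) - P * (vA * vB)| ≤ ε * (a * b) := by
      rw [← mul_sub, abs_mul, abs_of_nonneg hP0]
      calc P * |a * b / 2 - vA * vB| ≤ 1 * (ε * (a * b)) :=
            mul_le_mul hP1 h6 (abs_nonneg _) zero_le_one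
        _ = ε * (a * b) := one_mul _
    calc |N - P * (vA * vB)|
        ≤ |N - P * (a * b / 2)| + |P * (a * b / 2) - P * (vA * vB)| := abs_sub_le _ _ _
      _ ≤ ε * b * a + ε * (a * b) := add_le_add hN h5
      _ = 2 * ε * (a * b) := by ring
  have hratio : |N / (vA * vB)| ≤ 1 := by
    rw [abs_div, abs_of_pos hDpos, div_le_one hDpos]
    exact hNle
  have hratio' := abs_le.mp hratio
  have hcosθ' : Real.cos (Real.arccos (N / (vA * vB))) = N / (vA * vB) :=
    Real.cos_arccos hratio'.1 hratio'.2
  have hclose : |N / (vA * vB) - P| ≤ 5 * ε := by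
    have e : N / (vA * vB) - P = (N - P * (vA * vB)) / (vA * vB) := by
      field_simp
    rw [e, abs_div, abs_of_pos hDpos, div_le_iff₀ hDpos]
    calc |N - P * (vA * vB)| ≤ 2 * ε * (a * b) := hNP
      _ ≤ 5 * ε * ((1 / 2 - ε) * (a * b)) := by
          nlinarith [mul_nonneg (mul_nonneg hε.le (mul_pos ha hb).le)
            (by linarith : (0:ℝ) ≤ 1 / 2 - 5 * ε)]
      _ ≤ 5 * ε * (vA * vB) := by
          exact mul_le_mul_of_nonneg_left hD1 (by positivity)
  refine angle_close hε hε10 (Real.arccos_nonneg _) (Real.arccos_le_pi _)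
    (Real.arccos_nonneg _) (Real.arccos_le_pi _) ?_
  rw [hcosθ', hcg]
  exact hclose

lemma sq_bound {nn : ℕ → ℕ} {d : ℕ} {W : ∀ i : ℕ, Matrix (Fin (nn (i + 1))) (Fin (nn i)) ℝ}
    {ε : ℝ} (hG : R2WDCond nn d W ε) {i : ℕ} (hi : i < d)
    (x : Fin (nn 0) → ℝ) (hx : subnet nn W i x ≠ 0) :
    |dotp (subnet nn W (i + 1) x) (subnet nn W (i + 1) x)
        - vnorm (subnet nn W i x) * vnorm (subnet nn W i x) / 2|
      ≤ ε * vnorm (subnet nn W i x) * vnorm (subnet nn W i x) := by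
  have h := hG i hi x x x 0 x 0
  rw [subnet_zero nn W i] at h
  simp only [sub_zero] at h
  rw [dotp_mulVec_sub, dotp_transmul, ← subnet_succ, dotp_Q_self hx] at h
  exact h

lemma normstep {nn : ℕ → ℕ} {d : ℕ} {W : ∀ i : ℕ, Matrix (Fin (nn (i + 1))) (Fin (nn i)) ℝ}
    {ε : ℝ} (hε10 : 10 * ε < 1) (hG : R2WDCond nn d W ε) {i : ℕ} (hi : i < d)
    {x : Fin (nn 0) → ℝ} (hx : subnet nn W i x ≠ 0) :
    subnet nn W (i + 1) x ≠ 0 := by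
  have h := sq_bound hG hi x hx
  have ha : 0 < vnorm (subnet nn W i x) := vnorm_pos hx
  intro h0
  rw [h0] at h
  have hd0 : dotp (0 : Fin (nn (i + 1)) → ℝ) 0 = 0 := by simp [dotp]
  rw [hd0] at h
  have h1 := (abs_le.mp h).1
  nlinarith [mul_pos ha ha]

lemma anglestep {nn : ℕ → ℕ} {d : ℕ} {W : ∀ i : ℕ, Matrix (Fin (nn (i + 1))) (Fin (nn i)) ℝ}
    {ε : ℝ} (hε : 0 < ε) (hε10 : 10 * ε < 1) (hG : R2WDCond nn d W ε) {i : ℕ} (hi : i < d)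
    {x y : Fin (nn 0) → ℝ} (hx : subnet nn W i x ≠ 0) (hy : subnet nn W i y ≠ 0) :
    |ang (subnet nn W (i + 1) x) (subnet nn W (i + 1) y) -
        gAngle (ang (subnet nn W i x) (subnet nn W i y))| ≤ 4 * Real.sqrt ε := by
  have hGx := normstep hε10 hG hi hx
  have hGy := normstep hε10 hG hi hy
  have hxx := sq_bound hG hi x hx
  have hyy := sq_bound hG hi y hy
  rw [← vnorm_sq] at hxx hyy
  have hxy := hG i hi x y y 0 x 0
  rw [subnet_zero nn W i] at hxy
  simp only [sub_zero] at hxy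
  rw [dotp_mulVec_sub, dotp_transmul, ← subnet_succ, ← subnet_succ, dotp_Q hx hy,
    dotp_comm] at hxy
  show |Real.arccos (dotp (subnet nn W (i + 1) x) (subnet nn W (i + 1) y) /
      (vnorm (subnet nn W (i + 1) x) * vnorm (subnet nn W (i + 1) y))) -
      Real.arccos (((π - ang (subnet nn W i x) (subnet nn W i y)) *
        Real.cos (ang (subnet nn W i x) (subnet nn W i y)) +
        Real.sin (ang (subnet nn W i x) (subnet nn W i y))) / π)| ≤ 4 * Real.sqrt ε
  exact abstract_step hε hε10 (vnorm_pos hx) (vnorm_pos hy)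
    (ang_nonneg _ _) (ang_le_pi _ _) hxx hyy hxy
    (vnorm_nonneg _) (vnorm_nonneg _) (abs_dotp_le _ _)

end AuxLemmas

theorem statement13 (nn : ℕ → ℕ) (d : ℕ)
    (W : ∀ i : ℕ, Matrix (Fin (nn (i + 1))) (Fin (nn i)) ℝ) (ε : ℝ)
    (hε : 0 < ε) (hεd : 2 * (d : ℝ) * ε < 1) (hε10 : 10 * ε < 1)
    (hG : R2WDCond nn d W ε) :
    ∀ x y : Fin (nn 0) → ℝ, x ≠ 0 → y ≠ 0 → ∀ i : ℕ, i < d →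
      subnet nn W (i + 1) x ≠ 0 ∧ subnet nn W (i + 1) y ≠ 0 ∧
      |ang (subnet nn W (i + 1) x) (subnet nn W (i + 1) y) -
          gAngle (ang (subnet nn W i x) (subnet nn W i y))| ≤ 4 * Real.sqrt ε := by
  intro x y hx hy i hid
  have hne : ∀ (z : Fin (nn 0) → ℝ), z ≠ 0 → ∀ j, j ≤ d → subnet nn W j z ≠ 0 := by
    intro z hz j
    induction j with
    | zero => intro _; exact hz
    | succ j ih =>
      intro hj
      have hjd : j < d := Nat.lt_of_succ_le hj
      exact normstep hε10 hG hjd (ih hjd.le)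
  exact ⟨hne x hx (i + 1) (Nat.succ_le_of_lt hid), hne y hy (i + 1) (Nat.succ_le_of_lt hid),
    anglestep hε hε10 hG hid (hne x hx i hid.le) (hne y hy i hid.le)⟩
end R2WDCFormal
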